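/- Let $E_1,\dots,E_n,F$ be Banach spaces (over the real or complex field), $1<p<\infty$, $1/p+1/p^*=1$, and $T:E_1\times\cdots\times E_n\to F$ a bounded $n$-linear operator. The following are equivalent: (i) for all sequences $(x_j^{(k)})_{j=1}^\infty$ in $E_k$ with $\sum_{j=1}^\infty\|x_j^{(k)}\|^{p}<\infty$ for $k=1,\dots,n$, the multi-indexed family $(T(x_{j_1}^{(1)},\dots,x_{j_n}^{(n)}))_{(j_1,\dots,j_n)\in\mathbb{N}^n}$ is Cohen strongly $p$-summing in $F$, i.e. $\sum_{(j_1,\dots,j_n)\in\mathbb{N}^n}|\varphi_{j_1,\dots,j_n}(T(x_{j_1}^{(1)},\dots,x_{j_n}^{(n)}))|<\infty$ for every family $(\varphi_{j_1,\dots,j_n})$ in $F'$ with $\sup_{y\in B_F}\sum_{(j_1,\dots,j_n)\in\mathbb{N}^n}|\varphi_{j_1,\dots,j_n}(y)|^{p^*}<\infty$; (ii) there exists $C>0$ such that $\sum_{j_1,\dots,j_n=1}^m|\varphi_{j_1,\dots,j_n}(T(x_{j_1}^{(1)},\dots,x_{j_n}^{(n)}))|\le C\,\prod_{k=1}^n(\sum_{j=1}^m\|x_j^{(k)}\|^{p})^{1/p}\,\|(\varphi_{j_1,\dots,j_n})_{j_1,\dots,j_n=1}^m\|_{w,p^*}$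 for all $m\in\mathbb{N}$, all $x_j^{(k)}\in E_k$ and all $\varphi_{j_1,\dots,j_n}\in F'$. -/
import Mathlib


open scoped BigOperators

/-- The weak `q`-norm of a finite family of continuous linear functionals on `F`. -/
noncomputable def weakNorm {𝕜 F : Type*} [RCLike 𝕜] [NormedAddCommGroup F] [NormedSpace 𝕜 F]
    {ι : Type*} [Fintype ι] (q : ℝ) (φ : ι → F →L[𝕜] 𝕜) : ℝ :=
  ⨆ y : Metric.closedBall (0 : F) 1, (∑ i, ‖φ i (y : F)‖ ^ q) ^ (1 / q)

section aux
variable {𝕜 F : Type*} [RCLike 𝕜] [NormedAddCommGroup F] [NormedSpace 𝕜 F]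
  {ι : Type*} [Fintype ι] {q : ℝ}

lemma weakNorm_bddAbove (hq : 0 < q) (φ : ι → F →L[𝕜] 𝕜) :
    BddAbove (Set.range fun y : Metric.closedBall (0 : F) 1 =>
      (∑ i, ‖φ i (y : F)‖ ^ q) ^ (1 / q)) := by
  refine ⟨(∑ i, ‖φ i‖ ^ q) ^ (1 / q), ?_⟩
  rintro _ ⟨y, rfl⟩
  have hy : ‖(y : F)‖ ≤ 1 := mem_closedBall_zero_iff.mp y.2
  refine Real.rpow_le_rpow (by positivity) (Finset.sum_le_sum fun i _ => ?_) (by positivity)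
  refine Real.rpow_le_rpow (norm_nonneg _) ?_ hq.le
  calc ‖φ i (y : F)‖ ≤ ‖φ i‖ * ‖(y : F)‖ := (φ i).le_opNorm _
    _ ≤ ‖φ i‖ * 1 := by gcongr
    _ = ‖φ i‖ := mul_one _

lemma le_weakNorm (hq : 0 < q) (φ : ι → F →L[𝕜] 𝕜) {y : F}
    (hy : y ∈ Metric.closedBall (0 : F) 1) :
    (∑ i, ‖φ i y‖ ^ q) ^ (1 / q) ≤ weakNorm q φ :=
  le_ciSup (weakNorm_bddAbove hq φ) (⟨y, hy⟩ : Metric.closedBall (0 : F) 1)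

lemma weakNorm_nonneg (hq : 0 < q) (φ : ι → F →L[𝕜] 𝕜) : 0 ≤ weakNorm q φ := by
  have h := le_weakNorm hq φ (y := 0) (by simp)
  simpa [Real.zero_rpow hq.ne', Real.zero_rpow (inv_ne_zero hq.ne')] using h

lemma sum_le_weakNorm_rpow (hq : 0 < q) (φ : ι → F →L[𝕜] 𝕜) {y : F}
    (hy : y ∈ Metric.closedBall (0 : F) 1) :
    (∑ i, ‖φ i y‖ ^ q) ≤ (weakNorm q φ) ^ q := by
  have h := le_weakNorm hq φ hy
  have h0 : (0:ℝ) ≤ ∑ i, ‖φ i y‖ ^ q := by positivity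
  calc (∑ i, ‖φ i y‖ ^ q) = ((∑ i, ‖φ i y‖ ^ q) ^ (1/q)) ^ q := by
        rw [← Real.rpow_mul h0, one_div, inv_mul_cancel₀ hq.ne', Real.rpow_one]
    _ ≤ (weakNorm q φ) ^ q := Real.rpow_le_rpow (by positivity) h hq.le

lemma weakNorm_le (hq : 0 < q) {φ : ι → F →L[𝕜] 𝕜} {c : ℝ}
    (h : ∀ y ∈ Metric.closedBall (0 : F) 1, (∑ i, ‖φ i y‖ ^ q) ^ (1 / q) ≤ c) :
    weakNorm q φ ≤ c := by
  haveI : Nonempty (Metric.closedBall (0 : F) 1) := ⟨⟨0, by simp⟩⟩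
  exact ciSup_le fun y => h y y.2

lemma sum_range_dite {M' : ℕ} {β : Type*} [AddCommMonoid β] (g : Fin M' → β) :
    ∑ i ∈ Finset.range M', (if h : i < M' then g ⟨i, h⟩ else 0) = ∑ i, g i := by
  rw [Finset.sum_range fun i => if h : i < M' then g ⟨i, h⟩ else 0]
  exact Finset.sum_congr rfl fun i _ => by simp

end aux

/-- A bounded `n`-linear operator `T` is multiple Cohen strongly `p`-summing (it maps
`n`-tuples of absolutely `p`-summable sequences to Cohen strongly `p`-summing multi-indexed
families) iff the multiple Cohen summing inequality holds. -/
theorem stmt8 {𝕜 : Type*} [RCLike 𝕜] {n : ℕ} (hn : 0 < n)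
    {E : Fin n → Type*} [∀ k, NormedAddCommGroup (E k)] [∀ k, NormedSpace 𝕜 (E k)]
    [∀ k, CompleteSpace (E k)]
    {F : Type*} [NormedAddCommGroup F] [NormedSpace 𝕜 F] [CompleteSpace F]
    (p q : ℝ) (hp : 1 < p) (hq : 1 / p + 1 / q = 1)
    (T : ContinuousMultilinearMap 𝕜 E F) :
    (∀ x : ∀ k, ℕ → E k, (∀ k, Summable (fun j => ‖x k j‖ ^ p)) →
      ∀ φ : (Fin n → ℕ) → F →L[𝕜] 𝕜,
        (∃ C : ℝ, ∀ y ∈ Metric.closedBall (0 : F) 1, ∀ s : Finset (Fin n → ℕ),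
            ∑ α ∈ s, ‖φ α y‖ ^ q ≤ C) →
        Summable (fun α : Fin n → ℕ => ‖φ α (T (fun k => x k (α k)))‖))
    ↔ (∃ C > 0, ∀ (m : ℕ) (x : ∀ k, Fin m → E k) (φ : (Fin n → Fin m) → F →L[𝕜] 𝕜),
        ∑ α : Fin n → Fin m, ‖φ α (T (fun k => x k (α k)))‖ ≤
          C * (∏ k, (∑ j, ‖x k j‖ ^ p) ^ (1 / p)) * weakNorm q φ) := by
  have hp0 : (0:ℝ) < p := lt_trans one_pos hp
  have hip : 0 < 1/p := by positivity
  have hip1 : 1/p < 1 := by rw [div_lt_one hp0]; exact hp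
  have hiq : 0 < 1/q := by linarith
  have hq0 : (0:ℝ) < q := by
    rcases lt_trichotomy q 0 with h | h | h
    · exfalso
      have h2 : 1/q < 0 := div_neg_of_pos_of_neg one_pos h
      linarith
    · exfalso; rw [h] at hiq; simp at hiq
    · exact h
  have hq1 : (1:ℝ) < q := by
    have h1 : 1/q < 1 := by linarith
    rw [div_lt_one hq0] at h1
    exact h1
  constructor
  · -- forward direction
    classical
    intro H
    by_contra hfail
    push_neg at hfail
    have hsel : ∀ N : ℕ, ∃ (m : ℕ) (x : ∀ k, Fin m → E k) (φ : (Fin n → Fin m) → F →L[𝕜] 𝕜),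
        (((N:ℝ)+1) * 2^(N*n+N)) * (∏ k, (∑ j, ‖x k j‖ ^ p) ^ (1 / p)) * weakNorm q φ <
          ∑ α : Fin n → Fin m, ‖φ α (T (fun k => x k (α k)))‖ :=
      fun N => hfail _ (by positivity)
    choose m xN φN hN using hsel
    set a : ℕ → ℝ := fun N => (1/2:ℝ)^N with ha
    have ha_pos : ∀ N, 0 < a N := fun N => by rw [ha]; positivity
    have ha_le1 : ∀ N, a N ≤ 1 := fun N => pow_le_one₀ (by norm_num) (by norm_num)
    have ha_rpow_le : ∀ r : ℝ, 1 ≤ r → ∀ N, a N ^ r ≤ a N := fun r hr N => by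
      simpa using Real.rpow_le_rpow_of_exponent_ge (ha_pos N) (ha_le1 N) hr
    set t : (N : ℕ) → Fin n → ℝ := fun N k => (∑ j, ‖xN N k j‖ ^ p) ^ (1/p) with htdef
    set W : ℕ → ℝ := fun N => weakNorm q (φN N) with hWdef
    set S : ℕ → ℝ := fun N =>
      ∑ α : Fin n → Fin (m N), ‖φN N α (T (fun k => xN N k (α k)))‖ with hSdef
    have hS : ∀ N : ℕ, (((N:ℝ)+1) * 2^(N*n+N)) * (∏ k, t N k) * W N < S N := fun N => hN N
    have ht_nonneg : ∀ N k, 0 ≤ t N k := fun N k => Real.rpow_nonneg (by positivity) _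
    have hW_nonneg : ∀ N, 0 ≤ W N := fun N => weakNorm_nonneg hq0 _
    have hS_pos : ∀ N, 0 < S N := fun N =>
      lt_of_le_of_lt
        (mul_nonneg (mul_nonneg (by positivity)
          (Finset.prod_nonneg fun k _ => ht_nonneg N k)) (hW_nonneg N)) (hS N)
    have ht_pos : ∀ N k, 0 < t N k := by
      intro N k
      rcases (ht_nonneg N k).lt_or_eq with h | h
      · exact h
      · exfalso
        have hsum0 : (∑ j, ‖xN N k j‖ ^ p) = 0 :=
          (Real.rpow_eq_zero (by positivity) (by positivity : (1/p:ℝ) ≠ 0)).mp h.symm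
        have hx0 : ∀ j, xN N k j = 0 := by
          intro j
          have h1 := (Finset.sum_eq_zero_iff_of_nonneg
            (fun j _ => Real.rpow_nonneg (norm_nonneg _) _)).mp hsum0 j (Finset.mem_univ j)
          have h2 : ‖xN N k j‖ = 0 :=
            (Real.rpow_eq_zero (norm_nonneg _) hp0.ne').mp h1
          simpa using h2
        have hS0 : S N = 0 := by
          rw [hSdef]
          refine Finset.sum_eq_zero fun α _ => ?_
          have hT : T (fun k' => xN N k' (α k')) = 0 := T.map_coord_zero k (hx0 (α k))
          simp [hT]
        exact absurd (hS0 ▸ hS_pos N) (lt_irrefl 0)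
    have hW_pos : ∀ N, 0 < W N := by
      intro N
      rcases (hW_nonneg N).lt_or_eq with h | h
      · exact h
      · exfalso
        have hzero : ∀ (α : Fin n → Fin (m N)) (y : F), y ∈ Metric.closedBall (0:F) 1 →
            φN N α y = 0 := by
          intro α y hy
          have h1 := le_weakNorm hq0 (φN N) hy
          have h1' : (∑ β, ‖φN N β y‖ ^ q) ^ (1/q) ≤ 0 := by
            rw [h]; exact h1
          have h2 : (∑ β, ‖φN N β y‖ ^ q) = 0 := by
            have h3 : (0:ℝ) ≤ (∑ β, ‖φN N β y‖ ^ q) ^ (1/q) :=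
              Real.rpow_nonneg (by positivity) _
            have h4 : (∑ β, ‖φN N β y‖ ^ q) ^ (1/q) = 0 := le_antisymm h1' h3
            exact (Real.rpow_eq_zero (by positivity) (by positivity : (1/q:ℝ) ≠ 0)).mp h4
          have h5 := (Finset.sum_eq_zero_iff_of_nonneg
            (fun β _ => Real.rpow_nonneg (norm_nonneg _) _)).mp h2 α (Finset.mem_univ α)
          have h6 : ‖φN N α y‖ = 0 := (Real.rpow_eq_zero (norm_nonneg _) hq0.ne').mp h5
          simpa using h6
        have hφ0 : ∀ (α : Fin n → Fin (m N)) (z : F), φN N α z = 0 := by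
          intro α z
          by_cases hz : z = 0
          · simp [hz]
          · have hne : ‖z‖ ≠ 0 := norm_ne_zero_iff.mpr hz
            have hmem : ((‖z‖⁻¹ : ℝ) : 𝕜) • z ∈ Metric.closedBall (0:F) 1 := by
              rw [mem_closedBall_zero_iff, norm_smul, RCLike.norm_ofReal,
                abs_of_nonneg (inv_nonneg.mpr (norm_nonneg z)), inv_mul_cancel₀ hne]
            have h3 : ((‖z‖ : ℝ):𝕜) • (((‖z‖⁻¹ : ℝ):𝕜) • z) = z := by
              rw [smul_smul, ← RCLike.ofReal_mul, mul_inv_cancel₀ hne]; simp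
            calc φN N α z = φN N α (((‖z‖ : ℝ):𝕜) • (((‖z‖⁻¹ : ℝ):𝕜) • z)) := by rw [h3]
              _ = ((‖z‖ : ℝ):𝕜) • φN N α (((‖z‖⁻¹ : ℝ):𝕜) • z) := map_smul _ _ _
              _ = 0 := by rw [hzero α _ hmem, smul_zero]
        have hS0 : S N = 0 := by
          rw [hSdef]
          exact Finset.sum_eq_zero fun α _ => by simp [hφ0]
        exact absurd (hS0 ▸ hS_pos N) (lt_irrefl 0)
    -- construction of concatenated sequences
    set X : ∀ k, ℕ × ℕ → E k := fun k pr =>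
      if h : pr.2 < m pr.1 then
        ((a pr.1 / t pr.1 k : ℝ) : 𝕜) • xN pr.1 k ⟨pr.2, h⟩
      else 0 with hXdef
    set x' : ∀ k, ℕ → E k := fun k j => X k (Nat.pairEquiv.symm j) with hx'def
    have hx'eval : ∀ (k : Fin n) (N : ℕ) (i : Fin (m N)),
        x' k (Nat.pairEquiv (N, (i:ℕ))) = ((a N / t N k : ℝ) : 𝕜) • xN N k i := by
      intro k N i
      show X k (Nat.pairEquiv.symm (Nat.pairEquiv (N, (i:ℕ)))) = _
      rw [Equiv.symm_apply_apply]
      show dite ((i:ℕ) < m N) _ _ = _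
      rw [dif_pos i.isLt]
    have hXnorm : ∀ (k : Fin n) (pr : ℕ × ℕ),
        ‖X k pr‖ ^ p = (if h : pr.2 < m pr.1 then
          (a pr.1 / t pr.1 k) ^ p * ‖xN pr.1 k ⟨pr.2, h⟩‖ ^ p else 0) := by
      intro k pr
      by_cases h : pr.2 < m pr.1
      · rw [hXdef]
        simp only []
        rw [dif_pos h, dif_pos h, norm_smul, RCLike.norm_ofReal,
          abs_of_nonneg (div_nonneg (ha_pos _).le (ht_nonneg _ k)),
          Real.mul_rpow (div_nonneg (ha_pos _).le (ht_nonneg _ k)) (norm_nonneg _)]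
      · rw [hXdef]
        simp only []
        rw [dif_neg h, dif_neg h]
        simp [Real.zero_rpow hp0.ne']
    have hx'sum : ∀ k, Summable fun j => ‖x' k j‖ ^ p := by
      intro k
      have hfun : (fun j => ‖x' k j‖ ^ p) =
          (fun pr : ℕ × ℕ => ‖X k pr‖ ^ p) ∘ Nat.pairEquiv.symm := rfl
      rw [hfun]
      refine (Equiv.summable_iff _).mpr ?_
      have hFnn : (0:ℕ × ℕ → ℝ) ≤ (fun pr : ℕ × ℕ => ‖X k pr‖ ^ p) :=
        fun pr => Real.rpow_nonneg (norm_nonneg _) _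
      refine (summable_prod_of_nonneg hFnn).mpr ⟨?_, ?_⟩
      · intro N
        refine summable_of_ne_finset_zero (s := Finset.range (m N)) fun i hi => ?_
        rw [hXnorm]
        exact dif_neg (by simpa using hi)
      · refine Summable.of_nonneg_of_le (fun N => tsum_nonneg fun i => hFnn _) (fun N => ?_)
          (show Summable fun N : ℕ => a N by
            rw [ha]; exact summable_geometric_of_lt_one (by norm_num) (by norm_num))
        have h1 : ∑' i : ℕ, ‖X k (N, i)‖ ^ p =
            ∑ i : Fin (m N), (a N / t N k) ^ p * ‖xN N k i‖ ^ p := by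
          rw [tsum_eq_sum (s := Finset.range (m N))
            (fun i hi => by rw [hXnorm]; exact dif_neg (by simpa using hi))]
          calc ∑ i ∈ Finset.range (m N), ‖X k (N, i)‖ ^ p
              = ∑ i ∈ Finset.range (m N), (if h : i < m N then
                  (a N / t N k) ^ p * ‖xN N k ⟨i, h⟩‖ ^ p else 0) :=
                Finset.sum_congr rfl fun i _ => hXnorm k (N, i)
            _ = ∑ i : Fin (m N), (a N / t N k) ^ p * ‖xN N k i‖ ^ p :=
                sum_range_dite (fun i : Fin (m N) => (a N / t N k) ^ p * ‖xN N k i‖ ^ p)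
        calc (∑' i : ℕ, ‖X k (N, i)‖ ^ p)
            = ∑ i : Fin (m N), (a N / t N k) ^ p * ‖xN N k i‖ ^ p := h1
          _ = (a N / t N k) ^ p * ∑ i : Fin (m N), ‖xN N k i‖ ^ p := by
              rw [Finset.mul_sum]
          _ = (a N / t N k) ^ p * t N k ^ p := by
              congr 1
              show _ = ((∑ j, ‖xN N k j‖ ^ p) ^ (1/p) : ℝ) ^ p
              rw [← Real.rpow_mul (by positivity), one_div, inv_mul_cancel₀ hp0.ne',
                Real.rpow_one]
          _ = a N ^ p := by
              rw [Real.div_rpow (ha_pos N).le (ht_nonneg N k),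
                div_mul_cancel₀ _ (Real.rpow_pos_of_pos (ht_pos N k) p).ne']
          _ ≤ a N := ha_rpow_le p hp.le N
    -- the multi-indexed family of functionals
    set k0 : Fin n := ⟨0, hn⟩ with hk0
    set Psi : (Fin n → ℕ × ℕ) → (F →L[𝕜] 𝕜) := fun g =>
      if h : ∀ k, ((g k).1 = (g k0).1 ∧ (g k).2 < m ((g k0).1)) then
        ((a ((g k0).1) / W ((g k0).1) : ℝ) : 𝕜) •
          φN ((g k0).1) (fun k => ⟨(g k).2, (h k).2⟩)
      else 0 with hPsidef
    set φ' : (Fin n → ℕ) → F →L[𝕜] 𝕜 := fun α => Psi (fun k => Nat.pairEquiv.symm (α k))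
      with hφ'def
    have hφ'eval : ∀ (N : ℕ) (β : Fin n → Fin (m N)),
        φ' (fun k => Nat.pairEquiv (N, ((β k : ℕ)))) = ((a N / W N : ℝ) : 𝕜) • φN N β := by
      intro N β
      show Psi (fun k => Nat.pairEquiv.symm (Nat.pairEquiv (N, ((β k : ℕ))))) = _
      rw [show (fun k => Nat.pairEquiv.symm (Nat.pairEquiv (N, ((β k : ℕ)))))
          = (fun k => ((N, ((β k : ℕ))) : ℕ × ℕ)) from
        funext fun k => Equiv.symm_apply_apply _ _]
      show dite _ _ _ = _
      rw [dif_pos (fun k => ⟨rfl, (β k).isLt⟩)]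
    set blockF : ℕ → Finset (Fin n → ℕ) := fun N =>
      Finset.image (fun β : Fin n → Fin (m N) => fun k => Nat.pairEquiv (N, ((β k : ℕ))))
        Finset.univ with hblockdef
    have hblock_inj : ∀ N : ℕ, ∀ b₁ ∈ (Finset.univ : Finset (Fin n → Fin (m N))),
        ∀ b₂ ∈ Finset.univ,
        (fun k => Nat.pairEquiv (N, ((b₁ k : ℕ)))) = (fun k => Nat.pairEquiv (N, ((b₂ k : ℕ))))
          → b₁ = b₂ := by
      intro N b₁ _ b₂ _ hb
      funext k
      have h1 := congrFun hb k
      have h2 : ((N, ((b₁ k : ℕ))) : ℕ × ℕ) = (N, ((b₂ k : ℕ))) := Nat.pairEquiv.injective h1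
      exact Fin.val_injective (congrArg Prod.snd h2)
    have hblock_sum : ∀ (N : ℕ) (g : (Fin n → ℕ) → ℝ),
        ∑ α ∈ blockF N, g α
          = ∑ β : Fin n → Fin (m N), g (fun k => Nat.pairEquiv (N, ((β k : ℕ)))) := by
      intro N g
      rw [hblockdef]
      exact Finset.sum_image (hblock_inj N)
    have hblock_mem : ∀ (N : ℕ) (α : Fin n → ℕ), α ∈ blockF N →
        (Nat.pairEquiv.symm (α k0)).1 = N := by
      intro N α hα
      obtain ⟨β, -, rfl⟩ := Finset.mem_image.mp hα
      simp
    have hφ'bdd : ∀ y ∈ Metric.closedBall (0:F) 1, ∀ s : Finset (Fin n → ℕ),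
        ∑ α ∈ s, ‖φ' α y‖ ^ q ≤ 2 := by
      intro y hy s
      set M : ℕ := (s.sup fun α => (Nat.pairEquiv.symm (α k0)).1) + 1 with hM
      have hstep1 : ∑ α ∈ s, ‖φ' α y‖ ^ q
          = ∑ α ∈ s.filter (fun α => φ' α ≠ 0), ‖φ' α y‖ ^ q := by
        refine (Finset.sum_filter_of_ne (p := fun α => φ' α ≠ 0) ?_).symm
        intro α hα hne h0
        apply hne
        rw [h0]
        simp [Real.zero_rpow hq0.ne']
      have hsub : s.filter (fun α => φ' α ≠ 0) ⊆ (Finset.range M).biUnion blockF := by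
        intro α hα
        obtain ⟨hαs, hαne⟩ := Finset.mem_filter.mp hα
        have hcond : ∀ k, ((Nat.pairEquiv.symm (α k)).1 = (Nat.pairEquiv.symm (α k0)).1 ∧
            (Nat.pairEquiv.symm (α k)).2 < m ((Nat.pairEquiv.symm (α k0)).1)) := by
          by_contra hc
          exact hαne (dif_neg hc)
        refine Finset.mem_biUnion.mpr ⟨(Nat.pairEquiv.symm (α k0)).1, ?_, ?_⟩
        · exact Finset.mem_range.mpr (Nat.lt_succ_of_le
            (Finset.le_sup (f := fun α => (Nat.pairEquiv.symm (α k0)).1) hαs))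
        · rw [hblockdef]
          refine Finset.mem_image.mpr
            ⟨fun k => ⟨(Nat.pairEquiv.symm (α k)).2, (hcond k).2⟩, Finset.mem_univ _, ?_⟩
          funext k
          show Nat.pairEquiv ((Nat.pairEquiv.symm (α k0)).1, (Nat.pairEquiv.symm (α k)).2) = α k
          rw [show (((Nat.pairEquiv.symm (α k0)).1, (Nat.pairEquiv.symm (α k)).2) : ℕ × ℕ)
              = Nat.pairEquiv.symm (α k) from Prod.ext ((hcond k).1).symm rfl]
          exact Nat.pairEquiv.apply_symm_apply (α k)
      have hdisj : (↑(Finset.range M) : Set ℕ).PairwiseDisjoint blockF := by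
        intro N1 _ N2 _ hne
        exact Finset.disjoint_left.mpr fun α h1 h2 =>
          hne ((hblock_mem N1 α h1).symm.trans (hblock_mem N2 α h2))
      have hblockbound : ∀ N : ℕ, ∑ α ∈ blockF N, ‖φ' α y‖ ^ q ≤ a N := by
        intro N
        rw [hblock_sum N (fun α => ‖φ' α y‖ ^ q)]
        have heach : ∀ β : Fin n → Fin (m N),
            ‖φ' (fun k => Nat.pairEquiv (N, ((β k : ℕ)))) y‖ ^ q
              = (a N / W N) ^ q * ‖φN N β y‖ ^ q := by
          intro β
          rw [hφ'eval, ContinuousLinearMap.smul_apply, norm_smul, RCLike.norm_ofReal,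
            abs_of_nonneg (div_nonneg (ha_pos N).le (hW_nonneg N)),
            Real.mul_rpow (div_nonneg (ha_pos N).le (hW_nonneg N)) (norm_nonneg _)]
        calc (∑ β : Fin n → Fin (m N),
              ‖φ' (fun k => Nat.pairEquiv (N, ((β k : ℕ)))) y‖ ^ q)
            = ∑ β : Fin n → Fin (m N), (a N / W N) ^ q * ‖φN N β y‖ ^ q :=
              Finset.sum_congr rfl fun β _ => heach β
          _ = (a N / W N) ^ q * ∑ β : Fin n → Fin (m N), ‖φN N β y‖ ^ q := by
              rw [Finset.mul_sum]
          _ ≤ (a N / W N) ^ q * W N ^ q := by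
              refine mul_le_mul_of_nonneg_left ?_
                (Real.rpow_nonneg (div_nonneg (ha_pos N).le (hW_nonneg N)) _)
              exact sum_le_weakNorm_rpow hq0 (φN N) hy
          _ = a N ^ q := by
              rw [Real.div_rpow (ha_pos N).le (hW_nonneg N),
                div_mul_cancel₀ _ (Real.rpow_pos_of_pos (hW_pos N) q).ne']
          _ ≤ a N := ha_rpow_le q hq1.le N
      calc ∑ α ∈ s, ‖φ' α y‖ ^ q
          = ∑ α ∈ s.filter (fun α => φ' α ≠ 0), ‖φ' α y‖ ^ q := hstep1
        _ ≤ ∑ α ∈ (Finset.range M).biUnion blockF, ‖φ' α y‖ ^ q :=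
            Finset.sum_le_sum_of_subset_of_nonneg hsub
              (fun α _ _ => Real.rpow_nonneg (norm_nonneg _) _)
        _ = ∑ N ∈ Finset.range M, ∑ α ∈ blockF N, ‖φ' α y‖ ^ q := Finset.sum_biUnion hdisj
        _ ≤ ∑ N ∈ Finset.range M, a N := Finset.sum_le_sum fun N _ => hblockbound N
        _ ≤ 2 := by rw [ha]; exact sum_geometric_two_le M
    -- apply the hypothesis and derive a contradiction
    have hsum := H x' hx'sum φ' ⟨2, hφ'bdd⟩
    set B := ∑' α : Fin n → ℕ, ‖φ' α (T (fun k => x' k (α k)))‖ with hBdef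
    set N := ⌈B⌉₊ with hNdef
    have h1 : ∑ α ∈ blockF N, ‖φ' α (T (fun k => x' k (α k)))‖ ≤ B :=
      Summable.sum_le_tsum _ (fun _ _ => norm_nonneg _) hsum
    have h2 : ∑ α ∈ blockF N, ‖φ' α (T (fun k => x' k (α k)))‖
        = (a N / W N) * (∏ k, (a N / t N k)) * S N := by
      rw [hblock_sum N (fun α => ‖φ' α (T (fun k => x' k (α k)))‖)]
      have heach : ∀ β : Fin n → Fin (m N),
          ‖φ' (fun k => Nat.pairEquiv (N, ((β k : ℕ))))
              (T (fun k => x' k (Nat.pairEquiv (N, ((β k : ℕ))))))‖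
            = (a N / W N) * (∏ k, (a N / t N k)) * ‖φN N β (T (fun k => xN N k (β k)))‖ := by
        intro β
        have hT : (T (fun k => x' k (Nat.pairEquiv (N, ((β k : ℕ)))))) =
            (∏ k, ((a N / t N k : ℝ) : 𝕜)) • T (fun k => xN N k (β k)) := by
          rw [show (fun k => x' k (Nat.pairEquiv (N, ((β k : ℕ)))))
              = (fun k => ((a N / t N k : ℝ) : 𝕜) • xN N k (β k)) from
            funext fun k => hx'eval k N (β k)]
          exact T.map_smul_univ _ _
        rw [hφ'eval, hT, ContinuousLinearMap.smul_apply, map_smul, norm_smul, norm_smul,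
          ← RCLike.ofReal_prod, RCLike.norm_ofReal, RCLike.norm_ofReal,
          abs_of_nonneg (div_nonneg (ha_pos N).le (hW_nonneg N)),
          abs_of_nonneg (Finset.prod_nonneg fun k _ =>
            div_nonneg (ha_pos N).le (ht_nonneg N k))]
        ring
      calc (∑ β : Fin n → Fin (m N),
            ‖φ' (fun k => Nat.pairEquiv (N, ((β k : ℕ))))
              (T (fun k => x' k (Nat.pairEquiv (N, ((β k : ℕ))))))‖)
          = ∑ β : Fin n → Fin (m N),
              (a N / W N) * (∏ k, (a N / t N k)) * ‖φN N β (T (fun k => xN N k (β k)))‖ :=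
            Finset.sum_congr rfl fun β _ => heach β
        _ = (a N / W N) * (∏ k, (a N / t N k)) * S N := by rw [← Finset.mul_sum]
    have hcoef_pos : 0 < (a N / W N) * (∏ k, (a N / t N k)) :=
      mul_pos (div_pos (ha_pos N) (hW_pos N))
        (Finset.prod_pos fun k _ => div_pos (ha_pos N) (ht_pos N k))
    have hprod : (∏ k, (a N / t N k)) * (∏ k, t N k) = a N ^ n := by
      rw [← Finset.prod_mul_distrib,
        Finset.prod_congr rfl (fun k _ => div_mul_cancel₀ (a N) (ht_pos N k).ne')]
      simp [Finset.prod_const, Finset.card_univ]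
    have h2pow : (2:ℝ) ^ (N*n+N) * a N ^ (n+1) = 1 := by
      rw [ha]
      simp only []
      rw [← pow_mul, show N * (n+1) = N*n+N by ring, one_div, inv_pow,
        mul_inv_cancel₀ (by positivity)]
    have hkey : ((N:ℝ)+1)
        = (a N / W N) * (∏ k, (a N / t N k)) * ((((N:ℝ)+1) * 2^(N*n+N)) * (∏ k, t N k) * W N) := by
      have hW' : a N / W N * W N = a N := div_mul_cancel₀ _ (hW_pos N).ne'
      calc ((N:ℝ)+1) = ((N:ℝ)+1) * ((2:ℝ)^(N*n+N) * a N ^ (n+1)) := by rw [h2pow, mul_one]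
        _ = (((N:ℝ)+1) * 2^(N*n+N)) * ((a N / W N) * W N) * ((∏ k, (a N / t N k)) * (∏ k, t N k)) := by
            rw [hW', hprod]; ring
        _ = (a N / W N) * (∏ k, (a N / t N k)) * ((((N:ℝ)+1) * 2^(N*n+N)) * (∏ k, t N k) * W N) := by
            ring
    have h3 : ((N:ℝ)+1) < ∑ α ∈ blockF N, ‖φ' α (T (fun k => x' k (α k)))‖ := by
      rw [h2, hkey]
      exact mul_lt_mul_of_pos_left (hS N) hcoef_pos
    have h4 : B < ((N:ℝ)+1) := by
      have h5 := Nat.le_ceil B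
      rw [← hNdef] at h5
      linarith
    linarith
  · -- backward direction
    classical
    rintro ⟨C, hCpos, hC⟩ x hx φ ⟨C', hC'⟩
    have hC'0 : 0 ≤ C' := by simpa using hC' 0 (by simp) ∅
    set D := C * (∏ k, (∑' j, ‖x k j‖ ^ p) ^ (1/p)) * C' ^ (1/q) with hD
    refine summable_of_sum_le (c := D) (fun α => norm_nonneg _) fun s => ?_
    set M : ℕ := (s.sup fun α => Finset.univ.sup α) + 1 with hM
    have hmem : ∀ α ∈ s, ∀ k, α k < M := fun α hα k =>
      Nat.lt_succ_of_le (le_trans (Finset.le_sup (f := α) (Finset.mem_univ k))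
        (Finset.le_sup (f := fun α => Finset.univ.sup α) hα))
    have hinj : Function.Injective (fun β : Fin n → Fin M => fun k => ((β k : ℕ))) := by
      intro a b hab; funext k; exact Fin.val_injective (congrFun hab k)
    set ι : Finset (Fin n → ℕ) :=
      Finset.image (fun β : Fin n → Fin M => fun k => ((β k : ℕ))) Finset.univ with hι
    have hsub : s ⊆ ι := by
      intro α hα
      exact Finset.mem_image.mpr ⟨fun k => ⟨α k, hmem α hα k⟩, Finset.mem_univ _, rfl⟩
    have hinjOn : ∀ a ∈ (Finset.univ : Finset (Fin n → Fin M)), ∀ b ∈ Finset.univ,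
        (fun k => ((a k : ℕ))) = (fun k => ((b k : ℕ))) → a = b := fun a _ b _ h => hinj h
    have himg : ∀ (g : (Fin n → ℕ) → ℝ),
        ∑ α ∈ ι, g α = ∑ β : Fin n → Fin M, g (fun k => ((β k : ℕ))) := fun g =>
      Finset.sum_image hinjOn
    have key := hC M (fun k (j : Fin M) => x k (j : ℕ)) (fun β => φ (fun k => ((β k : ℕ))))
    have hWle : weakNorm q (fun β : Fin n → Fin M => φ (fun k => ((β k : ℕ)))) ≤ C' ^ (1/q) := by
      refine weakNorm_le hq0 fun y hy => ?_
      refine Real.rpow_le_rpow (by positivity) ?_ (by positivity)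
      calc (∑ β : Fin n → Fin M, ‖φ (fun k => ((β k : ℕ))) y‖ ^ q)
          = ∑ α ∈ ι, ‖φ α y‖ ^ q := (himg (fun α => ‖φ α y‖ ^ q)).symm
        _ ≤ C' := hC' y hy ι
    have hPle : (∏ k, (∑ j : Fin M, ‖x k (j:ℕ)‖ ^ p) ^ (1/p)) ≤
        ∏ k, (∑' j, ‖x k j‖ ^ p) ^ (1/p) := by
      refine Finset.prod_le_prod (fun k _ => by positivity) fun k _ => ?_
      refine Real.rpow_le_rpow (by positivity) ?_ (by positivity)
      calc (∑ j : Fin M, ‖x k (j:ℕ)‖ ^ p) = ∑ j ∈ Finset.range M, ‖x k j‖ ^ p :=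
            (Finset.sum_range fun j => ‖x k j‖ ^ p).symm
        _ ≤ ∑' j, ‖x k j‖ ^ p := Summable.sum_le_tsum _ (fun i _ => by positivity) (hx k)
    calc ∑ α ∈ s, ‖φ α (T fun k => x k (α k))‖
        ≤ ∑ α ∈ ι, ‖φ α (T fun k => x k (α k))‖ :=
          Finset.sum_le_sum_of_subset_of_nonneg hsub (fun _ _ _ => norm_nonneg _)
      _ = ∑ β : Fin n → Fin M, ‖φ (fun k => ((β k : ℕ)))
            (T fun k => x k ((β k : ℕ)))‖ := himg _
      _ ≤ C * (∏ k, (∑ j : Fin M, ‖x k (j:ℕ)‖ ^ p) ^ (1/p)) *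
            weakNorm q (fun β : Fin n → Fin M => φ (fun k => ((β k : ℕ)))) := key
      _ ≤ D := by
          rw [hD]
          have h1 : 0 ≤ weakNorm q (fun β : Fin n → Fin M => φ (fun k => ((β k : ℕ)))) :=
            weakNorm_nonneg hq0 _
          have h2 : 0 ≤ C * ∏ k, (∑' j, ‖x k j‖ ^ p) ^ (1/p) :=
            mul_nonneg hCpos.le (Finset.prod_nonneg fun k _ => Real.rpow_nonneg (tsum_nonneg fun j => Real.rpow_nonneg (norm_nonneg _) _) _)
          exact mul_le_mul (mul_le_mul_of_nonneg_left hPle hCpos.le) hWle h1 h2
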